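/- Let k ≥ 2 be an even integer, p a prime and ε ∈ {+1, −1}. Then the function 𝔣 : ℕ → ℤ defined by 𝔣(n) = σ_{k−1}(n) + ε·p^{k/2}·σ_{k−1}(n/p) is multiplicative: 𝔣(1) = 1 and 𝔣(mn) = 𝔣(m)·𝔣(n) whenever gcd(m, n) = 1. -/

import Mathlib

/-- `mySigma m n = ∑_{d ∣ n} d^m`, the sum of `m`-th powers of the divisors of `n`. -/
def mySigma (m n : ℕ) : ℕ := ∑ d ∈ n.divisors, d ^ m

/-- `frak k p ε n = σ_{k-1}(n) + ε p^{k/2} σ_{k-1}(n/p)`, where the last term is `0`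
if `p ∤ n`. -/
def frak (k p : ℕ) (ε : ℤ) (n : ℕ) : ℤ :=
  (mySigma (k - 1) n : ℤ) +
    ε * (p : ℤ) ^ (k / 2) * (if p ∣ n then (mySigma (k - 1) (n / p) : ℤ) else 0)

lemma mySigma_eq (m n : ℕ) : mySigma m n = ArithmeticFunction.sigma m n := by
  rw [ArithmeticFunction.sigma_apply]; rfl

lemma mySigma_mul (a : ℕ) {m n : ℕ} (h : Nat.Coprime m n) :
    mySigma a (m * n) = mySigma a m * mySigma a n := by
  simp only [mySigma_eq]
  exact ArithmeticFunction.isMultiplicative_sigma.map_mul_of_coprime h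

lemma mySigma_one (a : ℕ) : mySigma a 1 = 1 := by simp [mySigma]

theorem stmt5 (k p : ℕ) (hk : 2 ≤ k) (hke : Even k) (hp : p.Prime)
    (ε : ℤ) (hε : ε = 1 ∨ ε = -1) :
    frak k p ε 1 = 1 ∧
      ∀ m n : ℕ, 0 < m → 0 < n → Nat.Coprime m n →
        frak k p ε (m * n) = frak k p ε m * frak k p ε n := by
  constructor
  · simp [frak, mySigma_one, Nat.dvd_one, hp.ne_one]
  · intro m n hm hn hco
    by_cases hpm : p ∣ m
    · by_cases hpn : p ∣ n
      · exact absurd (Nat.eq_one_of_dvd_one (hco ▸ Nat.dvd_gcd hpm hpn)) hp.ne_one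
      · obtain ⟨q, rfl⟩ := hpm
        have hco' : Nat.Coprime q n := (Nat.Coprime.coprime_dvd_left ⟨p, mul_comm p q⟩ hco)
        have hdiv : p * q * n / p = q * n := by
          rw [mul_assoc, Nat.mul_div_cancel_left _ hp.pos]
        have hdiv2 : p * q / p = q := Nat.mul_div_cancel_left _ hp.pos
        simp only [frak, if_pos (Dvd.intro _ rfl : p ∣ p * q),
          if_pos ((Dvd.intro _ rfl : p ∣ p * q).mul_right n), if_neg hpn, hdiv, hdiv2,
          mySigma_mul _ hco, mySigma_mul _ hco']
        push_cast
        ring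
    · by_cases hpn : p ∣ n
      · obtain ⟨q, rfl⟩ := hpn
        have hco' : Nat.Coprime m q := (Nat.Coprime.coprime_dvd_right ⟨p, mul_comm p q⟩ hco)
        have hdiv : m * (p * q) / p = m * q := by
          rw [mul_comm m (p * q), mul_assoc, Nat.mul_div_cancel_left _ hp.pos, mul_comm]
        have hdiv2 : p * q / p = q := Nat.mul_div_cancel_left _ hp.pos
        simp only [frak, if_pos ((Dvd.intro _ rfl : p ∣ p * q).mul_left m),
          if_pos (Dvd.intro _ rfl : p ∣ p * q), if_neg hpm, hdiv, hdiv2,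
          mySigma_mul _ hco, mySigma_mul _ hco']
        push_cast
        ring
      · have hpmn : ¬ p ∣ m * n := by
          intro h
          rcases (hp.dvd_mul.mp h) with h | h
          exacts [hpm h, hpn h]
        simp only [frak, if_neg hpm, if_neg hpn, if_neg hpmn, mySigma_mul _ hco]
        push_cast
        ring
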